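/- Let U be a finite set and let (X_i)_{i∈U} be independent Bernoulli random variables with P(X_i = 1) = p_i ∈ (0,1); set ω_i = p_i/(1 − p_i) and A = {i ∈ U : X_i = 1}. Then for every integer n with 0 ≤ n ≤ |U| and every subset s ⊆ U with |s| = n, P( A = s | |A| = n ) = ( Π_{i∈s} ω_i ) / ( Σ_{t⊆U, |t|=n} Π_{j∈t} ω_j ). -/

import Mathlib

open MeasureTheory ProbabilityTheory Finset
open scoped Classical

lemma ofReal_prod' {ι : Type*} (s : Finset ι) (f : ι → ℝ) (h : ∀ i ∈ s, 0 ≤ f i) :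
    ENNReal.ofReal (∏ i ∈ s, f i) = ∏ i ∈ s, ENNReal.ofReal (f i) := by
  induction s using Finset.induction with
  | empty => simp
  | @insert a t hi ih =>
    rw [Finset.prod_insert hi, Finset.prod_insert hi,
      ENNReal.ofReal_mul (h a (Finset.mem_insert_self a t)),
      ih (fun i hi' => h i (Finset.mem_insert_of_mem hi'))]

/-- Conditioning independent Bernoulli draws with odds `ω_i = p_i/(1-p_i)` on
the total sample size equaling `n` yields the rejective (conditional Poisson)
distribution of fixed size `n`. -/
theorem bernoulli_cond_card_eq_rejective {Ω ι : Type*} [MeasurableSpace Ω]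
    [Fintype ι]
    (P : Measure Ω) [IsProbabilityMeasure P]
    (X : ι → Ω → ℝ) (hXmeas : ∀ i, Measurable (X i))
    (hX01 : ∀ i ω, X i ω = 0 ∨ X i ω = 1)
    (p : ι → ℝ) (hp : ∀ i, 0 < p i ∧ p i < 1)
    (hPX : ∀ i, P {ω | X i ω = 1} = ENNReal.ofReal (p i))
    (hindep : iIndepFun X P)
    (n : ℕ) (hn : n ≤ Fintype.card ι)
    (s : Finset ι) (hs : s.card = n) :
    ProbabilityTheory.cond P
        {ω | (Finset.univ.filter (fun i => X i ω = 1)).card = n}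
        {ω | Finset.univ.filter (fun i => X i ω = 1) = s}
      = ENNReal.ofReal
          ((∏ i ∈ s, p i / (1 - p i))
            / ∑ t ∈ Finset.univ.powersetCard n, ∏ j ∈ t, p j / (1 - p j)) := by
  have hq : ∀ i, 0 < 1 - p i := fun i => by linarith [(hp i).2]
  have hmeas1 : ∀ i, MeasurableSet {ω | X i ω = 1} := fun i =>
    hXmeas i (measurableSet_singleton 1)
  have hEt : ∀ t : Finset ι, {ω | Finset.univ.filter (fun i => X i ω = 1) = t}
        = ⋂ i, (if i ∈ t then {ω | X i ω = 1} else {ω | X i ω = 1}ᶜ) := by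
    intro t
    ext ω
    simp only [Set.mem_setOf_eq, Set.mem_iInter, Finset.ext_iff, Finset.mem_filter,
      Finset.mem_univ, true_and]
    constructor
    · intro h i
      split_ifs with hi
      · exact (h i).mpr hi
      · exact fun h1 => hi ((h i).mp h1)
    · intro h i
      have := h i
      split_ifs at this with hi
      · exact ⟨fun _ => hi, fun _ => this⟩
      · exact ⟨fun h1 => absurd h1 this, fun h2 => absurd h2 hi⟩
  -- probability of the event {A = t}
  have hPt : ∀ t : Finset ι,
      P {ω | Finset.univ.filter (fun i => X i ω = 1) = t}
        = ENNReal.ofReal ((∏ i ∈ t, p i) * ∏ i ∈ tᶜ, (1 - p i)) := by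
    intro t
    rw [hEt t, hindep.meas_iInter (fun i => ?_)]
    · have : ∀ i, P (if i ∈ t then {ω | X i ω = 1} else {ω | X i ω = 1}ᶜ)
          = ENNReal.ofReal (if i ∈ t then p i else 1 - p i) := by
        intro i
        split_ifs with hi
        · exact hPX i
        · rw [prob_compl_eq_one_sub (hmeas1 i), hPX i,
            ENNReal.ofReal_sub 1 (hp i).1.le, ENNReal.ofReal_one]
      simp only [this]
      have hnn : ∀ i ∈ (Finset.univ : Finset ι),
          (0:ℝ) ≤ if i ∈ t then p i else 1 - p i := by
        intro i _
        split_ifs with hi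
        · exact (hp i).1.le
        · exact (hq i).le
      rw [← ofReal_prod' _ _ hnn]
      congr 1
      rw [← Finset.prod_mul_prod_compl t (fun i => if i ∈ t then p i else 1 - p i)]
      congr 1
      · exact Finset.prod_congr rfl fun i hi => if_pos hi
      · exact Finset.prod_congr rfl fun i hi => if_neg (Finset.mem_compl.mp hi)
    · split_ifs with hi
      · exact ⟨{1}, measurableSet_singleton 1, rfl⟩
      · exact MeasurableSet.compl ⟨{1}, measurableSet_singleton 1, rfl⟩
  have hmeasEt : ∀ t : Finset ι,
      MeasurableSet {ω | Finset.univ.filter (fun i => X i ω = 1) = t} := by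
    intro t
    rw [hEt t]
    refine MeasurableSet.iInter fun i => ?_
    split_ifs
    · exact hmeas1 i
    · exact (hmeas1 i).compl
  -- the cardinality event as a disjoint union
  have hcard : {ω | (Finset.univ.filter (fun i => X i ω = 1)).card = n}
      = ⋃ t ∈ (Finset.univ.powersetCard n : Finset (Finset ι)),
          {ω | Finset.univ.filter (fun i => X i ω = 1) = t} := by
    ext ω
    simp only [Set.mem_setOf_eq, Set.mem_iUnion, Finset.mem_powersetCard]
    constructor
    · intro h
      exact ⟨Finset.univ.filter (fun i => X i ω = 1), ⟨Finset.subset_univ _, h⟩, rfl⟩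
    · rintro ⟨t, ⟨-, ht⟩, rfl⟩
      exact ht
  have hPcard : P {ω | (Finset.univ.filter (fun i => X i ω = 1)).card = n}
      = ENNReal.ofReal (∑ t ∈ Finset.univ.powersetCard n,
          (∏ i ∈ t, p i) * ∏ i ∈ tᶜ, (1 - p i)) := by
    rw [hcard, measure_biUnion_finset ?_ (fun t _ => hmeasEt t)]
    · rw [ENNReal.ofReal_sum_of_nonneg (fun t _ => mul_nonneg
        (Finset.prod_nonneg fun i _ => (hp i).1.le)
        (Finset.prod_nonneg fun i _ => (hq i).le))]
      exact Finset.sum_congr rfl fun t _ => hPt t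
    · intro t _ t' _ htt'
      refine Set.disjoint_left.mpr fun ω h1 h2 => htt' ?_
      rw [← h1, ← h2]
  have hmeasCard : MeasurableSet {ω | (Finset.univ.filter (fun i => X i ω = 1)).card = n} := by
    rw [hcard]; exact Finset.measurableSet_biUnion _ (fun t _ => hmeasEt t)
  -- positivity of the denominator
  have hSpos : 0 < ∑ t ∈ Finset.univ.powersetCard n,
      (∏ i ∈ t, p i) * ∏ i ∈ tᶜ, (1 - p i) := by
    refine Finset.sum_pos (fun t _ => by
      refine mul_pos (Finset.prod_pos fun i _ => (hp i).1)
        (Finset.prod_pos fun i _ => hq i)) ?_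
    rw [Finset.powersetCard_nonempty]
    simpa using hn
  -- compute the conditional probability
  have hsub : {ω | Finset.univ.filter (fun i => X i ω = 1) = s}
      ⊆ {ω | (Finset.univ.filter (fun i => X i ω = 1)).card = n} := by
    intro ω hω
    simp only [Set.mem_setOf_eq] at hω ⊢
    rw [hω, hs]
  rw [cond_apply hmeasCard, Set.inter_eq_right.mpr hsub, hPt s, hPcard]
  -- term identity
  have hterm : ∀ t : Finset ι, (∏ i ∈ t, p i) * ∏ i ∈ tᶜ, (1 - p i)
      = (∏ i ∈ t, p i / (1 - p i)) * ∏ i, (1 - p i) := by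
    intro t
    rw [← Finset.prod_mul_prod_compl t (fun i => 1 - p i), ← mul_assoc,
      ← Finset.prod_mul_distrib]
    congr 1
    exact Finset.prod_congr rfl fun i _ => (div_mul_cancel₀ _ (hq i).ne').symm
  have hC : (0:ℝ) < ∏ i, (1 - p i) := Finset.prod_pos fun i _ => hq i
  have halg : ((∏ i ∈ s, p i) * ∏ i ∈ sᶜ, (1 - p i))
      / (∑ t ∈ Finset.univ.powersetCard n, (∏ i ∈ t, p i) * ∏ i ∈ tᶜ, (1 - p i))
      = (∏ i ∈ s, p i / (1 - p i))
        / ∑ t ∈ Finset.univ.powersetCard n, ∏ j ∈ t, p j / (1 - p j) := by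
    rw [hterm s, Finset.sum_congr rfl (fun t _ => hterm t), ← Finset.sum_mul,
      mul_div_mul_right _ _ hC.ne']
  rw [← halg, ENNReal.ofReal_div_of_pos hSpos, div_eq_mul_inv, mul_comm]
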